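/- Let n ≥ 2, let v = (a_0, …, a_{n-1}) ∈ ℂ^n, let C_n(v) = [a_{j-i mod n}]_{0≤i,j≤n-1} be the circulant matrix of v with eigenvalues λ_0, …, λ_{n-1}, and let W_n(v) = [a_{j-i mod n}]_{1≤i,j≤n-1} be the (n-1)×(n-1) almost circulant matrix. Then det W_n(v) = (1/n) Σ_{l=0}^{n-1} ∏_{k ∈ [0,n-1]∖{l}} λ_k. -/

import Mathlib

open Matrix Finset

theorem det_almost_circulant (n : ℕ) (hn : 2 ≤ n) (v : Fin n → ℂ)
    (ζ : ℂ) (hζ : IsPrimitiveRoot ζ n) (lam : Fin n → ℂ)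
    (hlam : ∀ r : Fin n, lam r = ∑ k : Fin n, v k * ζ ^ ((r : ℕ) * (k : ℕ))) :
    (Matrix.of fun i j : Fin (n - 1) =>
        v ⟨((j : ℕ) + n - (i : ℕ)) % n, Nat.mod_lt _ (by omega)⟩).det =
      (1 / (n : ℂ)) * ∑ l : Fin n, ∏ k ∈ Finset.univ.erase l, lam k := by
  obtain ⟨m, rfl⟩ : ∃ m, n = m + 1 := ⟨n - 1, by omega⟩
  set C : Matrix (Fin (m+1)) (Fin (m+1)) ℂ := Matrix.of (fun i j => v (j - i)) with hC
  have hζn : ζ ^ (m+1) = 1 := hζ.pow_eq_one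
  have hpow : ∀ a : ℕ, ζ ^ (a % (m+1)) = ζ ^ a := by
    intro a
    conv_rhs => rw [← Nat.div_add_mod a (m+1)]
    rw [pow_add, pow_mul, hζn, one_pow, one_mul]
  set F : Matrix (Fin (m+1)) (Fin (m+1)) ℂ :=
    Matrix.of (fun i r => ζ ^ ((i : ℕ) * (r : ℕ))) with hF
  have hFdet : IsUnit F.det := by
    have hFv : F = Matrix.vandermonde (fun i : Fin (m+1) => ζ ^ (i : ℕ)) := by
      ext i j
      simp [hF, Matrix.vandermonde, pow_mul]
    rw [hFv, Matrix.det_vandermonde, isUnit_iff_ne_zero]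
    refine Finset.prod_ne_zero_iff.mpr fun i _ => Finset.prod_ne_zero_iff.mpr fun j hj => ?_
    have hij : i < j := Finset.mem_Ioi.mp hj
    refine sub_ne_zero.mpr fun h => absurd (hζ.pow_inj j.isLt i.isLt h) ?_
    exact fun h' => (Fin.val_injective h' ▸ hij).false
  have key : C * F = F * Matrix.diagonal lam := by
    ext i r
    rw [Matrix.mul_diagonal]
    have hterm : ∀ k : Fin (m+1),
        v ((i + k) - i) * ζ ^ (((i + k : Fin (m+1)) : ℕ) * (r : ℕ)) =
        ζ ^ ((i : ℕ) * (r : ℕ)) * (v k * ζ ^ ((r : ℕ) * (k : ℕ))) := by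
      intro k
      rw [add_sub_cancel_left]
      have h1 : ζ ^ (((i + k : Fin (m+1)) : ℕ) * (r : ℕ)) =
          ζ ^ ((i : ℕ) * (r : ℕ) + (r : ℕ) * (k : ℕ)) := by
        rw [pow_mul, Fin.val_add, hpow, ← pow_mul, add_mul, Nat.mul_comm (k : ℕ)]
      rw [h1, pow_add]; ring
    calc (C * F) i r = ∑ j : Fin (m+1), v (j - i) * ζ ^ ((j : ℕ) * (r : ℕ)) := by
          simp [Matrix.mul_apply, hC, hF]
      _ = ∑ k : Fin (m+1), v ((i + k) - i) * ζ ^ (((i + k : Fin (m+1)) : ℕ) * (r : ℕ)) :=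
          (Fintype.sum_equiv (Equiv.addLeft i) _ _ fun k => rfl).symm
      _ = ∑ k : Fin (m+1), ζ ^ ((i : ℕ) * (r : ℕ)) * (v k * ζ ^ ((r : ℕ) * (k : ℕ))) :=
          Finset.sum_congr rfl fun k _ => hterm k
      _ = F i r * lam r := by
          rw [← Finset.mul_sum, hlam r]; rfl
  have hCdiag : C = F * Matrix.diagonal lam * F⁻¹ := by
    rw [← key, Matrix.mul_nonsing_inv_cancel_right _ _ hFdet]
  have htr : (Matrix.adjugate C).trace = ∑ l, ∏ k ∈ Finset.univ.erase l, lam k := by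
    rw [hCdiag, Matrix.adjugate_mul_distrib, Matrix.adjugate_mul_distrib,
        Matrix.trace_mul_comm, Matrix.mul_assoc, ← Matrix.adjugate_mul_distrib,
        Matrix.nonsing_inv_mul _ hFdet, Matrix.adjugate_one, Matrix.mul_one,
        Matrix.adjugate_diagonal, Matrix.trace_diagonal]
  have hshift : ∀ c : Fin (m+1), Matrix.adjugate C c c = Matrix.adjugate C 0 0 := by
    intro c
    have hsub : C.submatrix (Equiv.addLeft c) (Equiv.addLeft c) = C := by
      ext i j
      simp only [Matrix.submatrix_apply, hC, Matrix.of_apply, Equiv.coe_addLeft]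
      rw [add_sub_add_left_eq_sub]
    have h := Matrix.adjugate_submatrix_equiv_self (Equiv.addLeft c) C
    rw [hsub] at h
    conv_rhs => rw [h]
    simp [Matrix.submatrix_apply]
  have htr2 : (Matrix.adjugate C).trace = ((m+1 : ℕ) : ℂ) * Matrix.adjugate C 0 0 := by
    calc (Matrix.adjugate C).trace = ∑ c : Fin (m+1), Matrix.adjugate C c c := rfl
      _ = ∑ _c : Fin (m+1), Matrix.adjugate C 0 0 := Finset.sum_congr rfl fun c _ => hshift c
      _ = ((m+1 : ℕ) : ℂ) * Matrix.adjugate C 0 0 := by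
          rw [Finset.sum_const, Finset.card_univ, Fintype.card_fin, nsmul_eq_mul]
  have hdet : (Matrix.of fun i j : Fin (m + 1 - 1) =>
        v ⟨((j : ℕ) + (m+1) - (i : ℕ)) % (m+1), Nat.mod_lt _ (by omega)⟩).det =
      Matrix.adjugate C 0 0 := by
    have hM : (Matrix.of fun i j : Fin (m + 1 - 1) =>
          v ⟨((j : ℕ) + (m+1) - (i : ℕ)) % (m+1), Nat.mod_lt _ (by omega)⟩) =
        C.submatrix (Fin.succAbove 0) (Fin.succAbove 0) := by
      ext i j
      simp only [Matrix.submatrix_apply, Matrix.of_apply, hC, Fin.succAbove_zero]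
      congr 1
      apply Fin.ext
      simp only [Fin.sub_def, Fin.val_succ]
      congr 1
      omega
    rw [hM, Matrix.adjugate_fin_succ_eq_det_submatrix]
    simp
  rw [hdet, ← htr, htr2]
  have hne : ((m+1 : ℕ) : ℂ) ≠ 0 := Nat.cast_ne_zero.mpr (Nat.succ_ne_zero m)
  push_cast at hne
  field_simp
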